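/- Fix real k_s, k_m, k_ℓ with k_m ≥ 0 and set 𝛂 = k_s + k_ℓ − 1/2, 𝛃 = k_ℓ − 1/2. Let P ⊂ ℂ^r be the union of all members of Π_k. Then P is stable under the action of W, and the set S = {(ξ_1,…,ξ_i, √−1 μ_{i+1},…,√−1 μ_r) : 0 ≤ i ≤ r, (ξ_1,…,ξ_i) ∈ D_k(Θ_i), μ_{i+1},…,μ_r ∈ ℝ with 0 ≤ μ_{i+1} ≤ ⋯ ≤ μ_r} is a complete set of representatives for the W-orbits in P; that is, for every p ∈ P the orbit W·p intersects S in exactly one point. -/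

import Mathlib

noncomputable section

/-- The set `D_k(Θ_i)` of discrete spectral parameters (for `i = 0` this is the
singleton consisting of the empty tuple). -/
def DkSet (α β km : ℝ) (i : ℕ) : Set (Fin i → ℝ) :=
  {ξ | (∀ h : 0 < i, ∃ n : ℕ, ξ ⟨0, h⟩ + |β| - α - 1 = 2 * (n : ℝ)) ∧
       (∀ h : 0 < i, ξ ⟨i - 1, by omega⟩ < 0) ∧
       (∀ j : ℕ, ∀ h : j + 1 < i,
         ∃ n : ℕ, ξ ⟨j + 1, h⟩ - ξ ⟨j, by omega⟩ - 2 * km = 2 * (n : ℝ))}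

/-- Action on `ℂ^r` of the element of the Weyl group of type `BC_r` given by the
sign vector `ε` and the permutation `σ`. -/
def wActC (r : ℕ) (ε : Fin r → ℤˣ) (σ : Equiv.Perm (Fin r)) (z : Fin r → ℂ) : Fin r → ℂ :=
  fun j => ((ε j : ℤ) : ℂ) * z (σ⁻¹ j)

/-- The set `{(ξ_1, …, ξ_i, √−1 t_{i+1}, …, √−1 t_r) : t ∈ ℝ^{r−i}} ⊆ ℂ^r`. -/
def baseSet (r i : ℕ) (ξ : Fin i → ℝ) : Set (Fin r → ℂ) :=
  {z | (∀ j : Fin r, ∀ h : (j : ℕ) < i, z j = ((ξ ⟨(j : ℕ), h⟩ : ℝ) : ℂ)) ∧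
       (∀ j : Fin r, i ≤ (j : ℕ) → (z j).re = 0)}

/-- The union `P` of all tempered residual subspaces. -/
def bigP (α β km : ℝ) (r : ℕ) : Set (Fin r → ℂ) :=
  {z | ∃ i : ℕ, i ≤ r ∧ ∃ ξ : Fin i → ℝ, ξ ∈ DkSet α β km i ∧
    ∃ (ε : Fin r → ℤˣ) (σ : Equiv.Perm (Fin r)), z ∈ wActC r ε σ '' baseSet r i ξ}

/-- The set `S` of representatives
`(ξ_1, …, ξ_i, √−1 μ_{i+1}, …, √−1 μ_r)` with `0 ≤ μ_{i+1} ≤ ⋯ ≤ μ_r`. -/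
def repS (α β km : ℝ) (r : ℕ) : Set (Fin r → ℂ) :=
  {z | ∃ i : ℕ, i ≤ r ∧ ∃ ξ : Fin i → ℝ, ξ ∈ DkSet α β km i ∧
    (∀ j : Fin r, ∀ h : (j : ℕ) < i, z j = ((ξ ⟨(j : ℕ), h⟩ : ℝ) : ℂ)) ∧
    (∀ j : Fin r, i ≤ (j : ℕ) → (z j).re = 0 ∧ 0 ≤ (z j).im) ∧
    (∀ p q : Fin r, i ≤ (q : ℕ) → (q : ℕ) ≤ (p : ℕ) → (z q).im ≤ (z p).im)}

lemma wActC_comp (r : ℕ) (ε ε' : Fin r → ℤˣ) (σ σ' : Equiv.Perm (Fin r)) (z : Fin r → ℂ) :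
    wActC r ε σ (wActC r ε' σ' z)
      = wActC r (fun j => ε j * ε' (σ⁻¹ j)) (σ * σ') z := by
  funext j
  simp [wActC, mul_inv_rev, Units.val_mul, mul_assoc]

lemma wActC_inv (r : ℕ) (ε : Fin r → ℤˣ) (σ : Equiv.Perm (Fin r)) (z : Fin r → ℂ) :
    wActC r (fun j => ε (σ j)) σ⁻¹ (wActC r ε σ z) = z := by
  funext j
  simp only [wActC, inv_inv, Equiv.Perm.coe_inv, Equiv.symm_apply_apply, ← mul_assoc]
  rcases Int.units_eq_one_or (ε (σ j)) with h | h <;> simp [h]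

-- monotone rearrangement uniqueness

lemma monotone_unique {n : ℕ} {f g : Fin n → ℝ} (hf : Monotone f) (hg : Monotone g)
    (π : Equiv.Perm (Fin n)) (h : ∀ j, g j = f (π j)) : g = f := by
  have h1 : f ∘ π = g := by funext j; exact (h j).symm
  have h2 : f ∘ π = f ∘ Tuple.sort f := by
    rw [Tuple.comp_sort_eq_comp_iff_monotone, h1]; exact hg
  have h3 : Tuple.sort f = Equiv.refl _ := Tuple.sort_eq_refl_iff_monotone.2 hf
  rw [← h1, h2, h3]; rfl

lemma DkSet_mono {α β km : ℝ} {i : ℕ} {ξ : Fin i → ℝ} (hξ : ξ ∈ DkSet α β km i)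
    (hkm : 0 ≤ km) : ∀ p q : Fin i, (p : ℕ) ≤ (q : ℕ) → ξ p ≤ ξ q := by
  obtain ⟨-, -, h3⟩ := hξ
  have key : ∀ b : ℕ, ∀ hb : b < i, ∀ a : ℕ, ∀ _ha : a ≤ b, ξ ⟨a, by omega⟩ ≤ ξ ⟨b, hb⟩ := by
    intro b
    induction b with
    | zero => intro hb a ha; interval_cases a; exact le_refl _
    | succ b ih =>
      intro hb a ha
      rcases Nat.lt_or_ge a (b + 1) with h | h
      · have h1 : ξ ⟨a, by omega⟩ ≤ ξ ⟨b, by omega⟩ := ih (by omega) a (by omega)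
        obtain ⟨n, hn⟩ := h3 b hb
        have : (0 : ℝ) ≤ 2 * (n : ℝ) := by positivity
        nlinarith
      · have : a = b + 1 := by omega
        subst this; exact le_refl _
  intro p q hpq
  have := key q q.2 p hpq
  simpa using this

lemma DkSet_neg {α β km : ℝ} {i : ℕ} {ξ : Fin i → ℝ} (hξ : ξ ∈ DkSet α β km i)
    (hkm : 0 ≤ km) : ∀ j : Fin i, ξ j < 0 := by
  intro j
  have hi : 0 < i := j.pos
  have h2 := hξ.2.1 hi
  have := DkSet_mono hξ hkm j ⟨i - 1, by omega⟩ (by simp; omega)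
  exact lt_of_le_of_lt this h2

def Fc (t : ℝ) : ℂ := if t < 0 then (t : ℂ) else (t : ℝ) * Complex.I

lemma Fc_neg {t : ℝ} (h : t < 0) : Fc t = (t : ℂ) := if_pos h

lemma Fc_nonneg {t : ℝ} (h : 0 ≤ t) : Fc t = (t : ℝ) * Complex.I := if_neg (not_lt.2 h)

lemma Fc_re_nonneg {t : ℝ} (h : 0 ≤ t) : (Fc t).re = 0 := by simp [Fc_nonneg h]

lemma Fc_im_nonneg {t : ℝ} (h : 0 ≤ t) : (Fc t).im = t := by simp [Fc_nonneg h]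

lemma repS_to_g {α β km : ℝ} {r : ℕ} (hkm : 0 ≤ km) {s : Fin r → ℂ}
    (hs : s ∈ repS α β km r) :
    ∃ g : Fin r → ℝ, Monotone g ∧ ∀ j, s j = Fc (g j) := by
  obtain ⟨i, hi, ξ, hξ, hreal, him, hsort⟩ := hs
  refine ⟨fun j => if h : (j : ℕ) < i then ξ ⟨(j : ℕ), h⟩ else (s j).im, ?_, ?_⟩
  · intro p q hpq
    have hpq' : (p : ℕ) ≤ (q : ℕ) := hpq
    by_cases hp : (p : ℕ) < i <;> by_cases hq : (q : ℕ) < i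
    · simp only [dif_pos hp, dif_pos hq]
      exact DkSet_mono hξ hkm ⟨p, hp⟩ ⟨q, hq⟩ hpq'
    · simp only [dif_pos hp, dif_neg hq]
      have h1 : ξ ⟨(p : ℕ), hp⟩ < 0 := DkSet_neg hξ hkm _
      have h2 := (him q (by omega)).2
      linarith
    · omega
    · simp only [dif_neg hp, dif_neg hq]
      exact hsort q p (by omega) hpq'
  · intro j
    by_cases hj : (j : ℕ) < i
    · simp only [dif_pos hj]
      rw [Fc_neg (DkSet_neg hξ hkm _)]
      exact hreal j hj
    · simp only [dif_neg hj]
      obtain ⟨h1, h2⟩ := him j (by omega)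
      rw [Fc_nonneg h2]
      apply Complex.ext <;> simp [h1]

lemma repS_unique {α β km : ℝ} {r : ℕ} (hkm : 0 ≤ km) {s s' : Fin r → ℂ}
    (hs : s ∈ repS α β km r) (hs' : s' ∈ repS α β km r)
    (π : Equiv.Perm (Fin r)) (c : Fin r → ℂ)
    (hc : ∀ j, c j = 1 ∨ c j = -1) (hrel : ∀ j, s' j = c j * s (π j)) : s' = s := by
  obtain ⟨g, hgmono, hg⟩ := repS_to_g hkm hs
  obtain ⟨g', hg'mono, hg'⟩ := repS_to_g hkm hs'
  have hgg : ∀ j, g' j = g (π j) := by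
    intro j
    have e : Fc (g' j) = c j * Fc (g (π j)) := by rw [← hg, ← hg']; exact hrel j
    set a := g' j with ha
    set b := g (π j) with hb
    rcases lt_or_ge a 0 with h1 | h1 <;> rcases lt_or_ge b 0 with h2 | h2
    · rw [Fc_neg h1, Fc_neg h2] at e
      rcases hc j with hcj | hcj <;> rw [hcj] at e
      · simpa using e
      · have : a = -b := by
          have := congrArg Complex.re e; simpa using this
        linarith
    · rw [Fc_neg h1, Fc_nonneg h2] at e
      have := congrArg Complex.re e
      rcases hc j with hcj | hcj <;> rw [hcj] at this <;> simp at this <;> linarith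
    · rw [Fc_nonneg h1, Fc_neg h2] at e
      have := congrArg Complex.re e
      rcases hc j with hcj | hcj <;> rw [hcj] at this <;> simp at this <;> linarith
    · rw [Fc_nonneg h1, Fc_nonneg h2] at e
      have := congrArg Complex.im e
      rcases hc j with hcj | hcj <;> rw [hcj] at this <;> simp at this
      · exact this
      · linarith
  have : g' = g := monotone_unique hgmono hg'mono π hgg
  funext j
  rw [hg, hg', this]

lemma cardLt (r m : ℕ) (hm : m ≤ r) : Fintype.card {j : Fin r // (j : ℕ) < m} = m := by
  have e : {j : Fin r // (j : ℕ) < m} ≃ Fin m :=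
    ⟨fun j => ⟨j.1, j.2⟩, fun j => ⟨⟨j.1, lt_of_lt_of_le j.2 hm⟩, j.2⟩,
      fun _ => rfl, fun _ => rfl⟩
  rw [Fintype.card_congr e, Fintype.card_fin]

lemma exists_rep {α β km : ℝ} {r i : ℕ} (hkm : 0 ≤ km) (hi : i ≤ r)
    {ξ : Fin i → ℝ} (hξ : ξ ∈ DkSet α β km i) {z₀ : Fin r → ℂ}
    (hz₀ : z₀ ∈ baseSet r i ξ) :
    ∃ s ∈ repS α β km r, ∃ (ε : Fin r → ℤˣ) (σ : Equiv.Perm (Fin r)),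
      wActC r ε σ z₀ = s := by
  classical
  set g : Fin r → ℝ := fun m => if h : (m : ℕ) < i then ξ ⟨(m : ℕ), h⟩ else |(z₀ m).im|
    with hgdef
  set σ := Tuple.sort g with hσdef
  have hmono : Monotone (g ∘ σ) := Tuple.monotone_sort g
  have hgneg : ∀ m : Fin r, g m < 0 ↔ (m : ℕ) < i := by
    intro m
    by_cases h : (m : ℕ) < i
    · simp only [hgdef, dif_pos h]
      exact ⟨fun _ => h, fun _ => DkSet_neg hξ hkm _⟩
    · simp only [hgdef, dif_neg h]
      constructor
      · intro hcon; exact absurd hcon (not_lt.2 (abs_nonneg _))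
      · intro hcon; exact absurd hcon h
  have hcard : Fintype.card {j : Fin r // g (σ j) < 0} = i := by
    have e1 : {j : Fin r // g (σ j) < 0} ≃ {j : Fin r // g j < 0} :=
      (σ : Equiv.Perm (Fin r)).subtypeEquiv (fun _ => Iff.rfl)
    have e2 : {j : Fin r // g j < 0} ≃ {j : Fin r // (j : ℕ) < i} :=
      Equiv.subtypeEquivRight (fun j => hgneg j)
    rw [Fintype.card_congr (e1.trans e2), cardLt r i hi]
  have hneg' : ∀ j : Fin r, (j : ℕ) < i → g (σ j) < 0 := by
    intro j hj
    by_contra hcon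
    push_neg at hcon
    have hsub : ∀ m : Fin r, g (σ m) < 0 → (m : ℕ) < (j : ℕ) := by
      intro m hm
      by_contra h'
      push_neg at h'
      have : g (σ j) ≤ g (σ m) := hmono (show j ≤ m from h')
      linarith
    have hinj : Function.Injective
        (fun m : {m : Fin r // g (σ m) < 0} => (⟨m.1, hsub m.1 m.2⟩ :
          {m : Fin r // (m : ℕ) < (j : ℕ)})) := by
      intro a b hab
      have h0 := congrArg Subtype.val hab
      exact Subtype.ext h0
    have := Fintype.card_le_of_injective _ hinj
    rw [hcard, cardLt r j (le_of_lt j.2)] at this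
    omega
  have hpos' : ∀ j : Fin r, i ≤ (j : ℕ) → 0 ≤ g (σ j) := by
    intro j hj
    by_contra hcon
    push_neg at hcon
    have hsub : ∀ m : Fin r, (m : ℕ) < (j : ℕ) + 1 → g (σ m) < 0 := by
      intro m hm
      have : g (σ m) ≤ g (σ j) := hmono (show m ≤ j by omega)
      linarith
    have hinj : Function.Injective
        (fun m : {m : Fin r // (m : ℕ) < (j : ℕ) + 1} => (⟨m.1, hsub m.1 m.2⟩ :
          {m : Fin r // g (σ m) < 0})) := by
      intro a b hab
      have h0 := congrArg Subtype.val hab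
      exact Subtype.ext h0
    have := Fintype.card_le_of_injective _ hinj
    rw [hcard, cardLt r ((j : ℕ) + 1) (by omega)] at this
    omega
  have hσlt : ∀ j : Fin i, (σ (Fin.castLE hi j) : ℕ) < i := by
    intro j
    have h1 : ((Fin.castLE hi j : Fin r) : ℕ) < i := j.2
    exact (hgneg _).1 (hneg' (Fin.castLE hi j) h1)
  set τ : Fin i → Fin i := fun j => ⟨(σ (Fin.castLE hi j) : ℕ), hσlt j⟩ with hτdef
  have hτinj : Function.Injective τ := by
    intro a b hab
    have h0 := congrArg Fin.val hab
    have h1 : σ (Fin.castLE hi a) = σ (Fin.castLE hi b) := Fin.ext h0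
    have h2 := σ.injective h1
    have h3 := congrArg Fin.val h2
    exact Fin.ext h3
  have hτbij : Function.Bijective τ := Finite.injective_iff_bijective.mp hτinj
  set τe : Equiv.Perm (Fin i) := Equiv.ofBijective τ hτbij with hτedef
  have hpre : ∀ j : Fin i, g (σ (Fin.castLE hi j)) = ξ (τe j) := by
    intro j
    have : τe j = τ j := rfl
    rw [this, hτdef]
    simp only [hgdef]
    rw [dif_pos (hσlt j)]
  have hξmono : Monotone ξ := fun a b hab => DkSet_mono hξ hkm a b hab
  have hξ''mono : Monotone (fun j : Fin i => g (σ (Fin.castLE hi j))) := by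
    intro a b hab
    exact hmono (show Fin.castLE hi a ≤ Fin.castLE hi b from hab)
  have hpreeq : (fun j : Fin i => g (σ (Fin.castLE hi j))) = ξ :=
    monotone_unique hξmono hξ''mono τe hpre
  refine ⟨fun j => Fc (g (σ j)), ⟨i, hi, ξ, hξ, ?_, ?_, ?_⟩, ?_⟩
  · intro j hj
    have hc : Fin.castLE hi ⟨(j : ℕ), hj⟩ = j := Fin.ext rfl
    have h1 : g (σ j) = ξ ⟨(j : ℕ), hj⟩ := by
      have := congrFun hpreeq ⟨(j : ℕ), hj⟩
      rwa [hc] at this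
    show Fc (g (σ j)) = ((ξ ⟨(j : ℕ), hj⟩ : ℝ) : ℂ)
    rw [h1, Fc_neg (DkSet_neg hξ hkm _)]
  · intro j hj
    exact ⟨Fc_re_nonneg (hpos' j hj), by rw [Fc_im_nonneg (hpos' j hj)]; exact hpos' j hj⟩
  · intro p q hq hqp
    show (Fc (g (σ q))).im ≤ (Fc (g (σ p))).im
    rw [Fc_im_nonneg (hpos' q hq), Fc_im_nonneg (hpos' p (le_trans hq hqp))]
    exact hmono (show q ≤ p from hqp)
  · refine ⟨fun j => if (z₀ (σ j)).im < 0 then -1 else 1, σ⁻¹, ?_⟩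
    funext j
    simp only [wActC, inv_inv]
    have hcast : (((if (z₀ (σ j)).im < 0 then (-1 : ℤˣ) else 1 : ℤˣ) : ℤ) : ℂ)
        = if (z₀ (σ j)).im < 0 then -1 else 1 := by
      split_ifs <;> simp
    rw [hcast]
    set m := σ j with hm
    by_cases hmi : (m : ℕ) < i
    · have h1 : z₀ m = ((ξ ⟨(m : ℕ), hmi⟩ : ℝ) : ℂ) := hz₀.1 m hmi
      have h2 : (z₀ m).im = 0 := by rw [h1]; simp
      rw [if_neg (by rw [h2]; exact lt_irrefl 0)]
      have h3 : g m = ξ ⟨(m : ℕ), hmi⟩ := by simp only [hgdef]; rw [dif_pos hmi]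
      rw [h3, Fc_neg (DkSet_neg hξ hkm _), h1, one_mul]
    · have h1 : (z₀ m).re = 0 := hz₀.2 m (by omega)
      have h3 : g m = |(z₀ m).im| := by simp only [hgdef]; rw [dif_neg hmi]
      rw [h3, Fc_nonneg (abs_nonneg _)]
      by_cases ht : (z₀ m).im < 0
      · rw [if_pos ht]
        apply Complex.ext <;> simp [h1, abs_of_neg ht]
      · rw [if_neg ht]
        push_neg at ht
        apply Complex.ext <;> simp [h1, abs_of_nonneg ht]

theorem stmt10 (ks km kl α β : ℝ) (hα : α = ks + kl - 1 / 2) (hβ : β = kl - 1 / 2)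
    (hkm : 0 ≤ km) (r : ℕ) :
    (∀ (ε : Fin r → ℤˣ) (σ : Equiv.Perm (Fin r)) (z : Fin r → ℂ),
      z ∈ bigP α β km r → wActC r ε σ z ∈ bigP α β km r) ∧
    (∀ z ∈ bigP α β km r, ∃! s : Fin r → ℂ, s ∈ repS α β km r ∧
      ∃ (ε : Fin r → ℤˣ) (σ : Equiv.Perm (Fin r)), wActC r ε σ z = s) := by
  constructor
  · rintro ε σ z ⟨i, hi, ξ, hξ, ε₀, σ₀, z₀, hz₀, hz⟩
    exact ⟨i, hi, ξ, hξ, fun j => ε j * ε₀ (σ⁻¹ j), σ * σ₀, z₀, hz₀,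
      by rw [← wActC_comp, hz]⟩
  · rintro z ⟨i, hi, ξ, hξ, ε₀, σ₀, z₀, hz₀, hz⟩
    obtain ⟨s, hsS, ε₁, σ₁, hs⟩ := exists_rep hkm hi hξ hz₀
    have hz₀z : wActC r (fun j => ε₀ (σ₀ j)) σ₀⁻¹ z = z₀ := by
      rw [← hz]; exact wActC_inv r ε₀ σ₀ z₀
    set εs : Fin r → ℤˣ := fun j => ε₁ j * ε₀ (σ₀ (σ₁⁻¹ j)) with hεs
    set σs : Equiv.Perm (Fin r) := σ₁ * σ₀⁻¹ with hσs
    have hws : wActC r εs σs z = s := by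
      rw [hεs, hσs, ← hs, ← hz₀z, wActC_comp]
    refine ⟨s, ⟨hsS, εs, σs, hws⟩, ?_⟩
    rintro s' ⟨hs'S, ε', σ', hs'⟩
    have hzs : wActC r (fun j => εs (σs j)) σs⁻¹ s = z := by
      rw [← hws]; exact wActC_inv r εs σs z
    have hkey : wActC r (fun j => ε' j * εs (σs (σ'⁻¹ j))) (σ' * σs⁻¹) s = s' := by
      rw [← hs', ← hzs, wActC_comp]
    refine repS_unique hkm hsS hs'S (σ' * σs⁻¹)⁻¹
      (fun j => (((ε' j * εs (σs (σ'⁻¹ j)) : ℤˣ) : ℤ) : ℂ)) ?_ ?_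
    · intro j
      rcases Int.units_eq_one_or (ε' j * εs (σs (σ'⁻¹ j))) with h | h
      · left; have := congrArg (fun u : ℤˣ => ((u : ℤ) : ℂ)) h; simpa using this
      · right; have := congrArg (fun u : ℤˣ => ((u : ℤ) : ℂ)) h; simpa using this
    · intro j
      rw [← hkey]
      rfl
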